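/- Let p be a prime, A ⊆ F_p, k ≥ 1 an integer, Γ ⊆ F_p a finite set, ρ ∈ (0, 1], and let B = { x ∈ F_p : ‖ξx/p‖_{ℝ/ℤ} ≤ ρ for all ξ ∈ Γ }. If |A ∩ B| < k, then the chromatic number of Cay(F_p, A) is at most (2k − 1) · ⌈2/ρ⌉^{|Γ|}. -/

import Mathlib

section aux

open Finset in
lemma sdiff_image_nonempty' {α β : Type*} [Fintype β] [DecidableEq β] (s : Finset α)
    (f : {x // x ∈ s} → β) (h : s.card < Fintype.card β) :
    (Finset.univ \ s.attach.image f).Nonempty := by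
  rw [Finset.sdiff_nonempty]
  intro hsub
  have h1 := Finset.card_le_card hsub
  have h2 := Finset.card_image_le (s := s.attach) (f := f)
  rw [Finset.card_attach] at h2
  rw [Finset.card_univ] at h1
  omega

open Finset in
noncomputable def greedyCol {n d : ℕ} (G : SimpleGraph (Fin n)) [DecidableRel G.Adj]
    (h : ∀ v : Fin n, (Finset.univ.filter (fun u => G.Adj u v)).card ≤ d) :
    Fin n → Fin (d + 1)
  | v =>
    (Finset.univ \ ((Finset.univ.filter fun u => G.Adj u v ∧ u < v).attach.image
      fun u => greedyCol G h u.1)).min'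
      (sdiff_image_nonempty' _ _ (by
        rw [Fintype.card_fin]
        have : (Finset.univ.filter fun u => G.Adj u v ∧ u < v) ⊆
            (Finset.univ.filter fun u => G.Adj u v) := by
          intro u hu
          simp only [Finset.mem_filter] at hu ⊢
          exact ⟨hu.1, hu.2.1⟩
        have := Finset.card_le_card this
        have := h v
        omega))
  termination_by v => v.val
  decreasing_by
    all_goals
      have h2 := (Finset.mem_filter.mp u.2).2.2
      omega

open Finset in
lemma greedyCol_proper {n d : ℕ} (G : SimpleGraph (Fin n)) [DecidableRel G.Adj]
    (h : ∀ v : Fin n, (Finset.univ.filter (fun u => G.Adj u v)).card ≤ d)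
    {u v : Fin n} (hadj : G.Adj u v) (hlt : u < v) :
    greedyCol G h v ≠ greedyCol G h u := by
  have hmem : greedyCol G h v ∈ Finset.univ \
      ((Finset.univ.filter fun w => G.Adj w v ∧ w < v).attach.image
        fun w => greedyCol G h w.1) := by
    rw [greedyCol]
    exact Finset.min'_mem _ _
  rw [Finset.mem_sdiff] at hmem
  intro heq
  apply hmem.2
  rw [heq]
  apply Finset.mem_image.mpr
  refine ⟨⟨u, ?_⟩, Finset.mem_attach _ _, rfl⟩
  simp only [Finset.mem_filter]
  exact ⟨Finset.mem_univ _, hadj, hlt⟩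

lemma colorable_of_card_adj_le {V : Type*} [Fintype V] (G : SimpleGraph V)
    [DecidableRel G.Adj] {d : ℕ}
    (h : ∀ v, (Finset.univ.filter (fun u => G.Adj u v)).card ≤ d) :
    G.Colorable (d + 1) := by
  classical
  set n := Fintype.card V with hn
  let e := Fintype.equivFin V
  let G' : SimpleGraph (Fin n) := G.comap e.symm
  have hAdj : ∀ a b, G'.Adj a b ↔ G.Adj (e.symm a) (e.symm b) := fun _ _ => Iff.rfl
  have h' : ∀ x : Fin n, (Finset.univ.filter (fun u => G'.Adj u x)).card ≤ d := by
    intro x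
    have hsub : (Finset.univ.filter fun u => G'.Adj u x) ⊆
        (Finset.univ.filter fun w => G.Adj w (e.symm x)).image e := by
      intro u hu
      simp only [Finset.mem_filter, Finset.mem_image] at hu ⊢
      exact ⟨e.symm u, ⟨Finset.mem_univ _, hu.2⟩, by simp⟩
    calc (Finset.univ.filter fun u => G'.Adj u x).card
        ≤ ((Finset.univ.filter fun w => G.Adj w (e.symm x)).image e).card :=
          Finset.card_le_card hsub
      _ ≤ (Finset.univ.filter fun w => G.Adj w (e.symm x)).card := Finset.card_image_le
      _ ≤ d := h _
  refine ⟨⟨fun v => greedyCol G' h' (e v), ?_⟩⟩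
  intro a b hab
  have hab' : G'.Adj (e a) (e b) := by rw [hAdj]; simpa using hab
  rcases lt_or_gt_of_ne (fun hh : e a = e b => hab.ne (e.injective hh)) with hlt | hlt
  · exact (greedyCol_proper G' h' hab' hlt).symm
  · exact greedyCol_proper G' h' hab'.symm hlt

end aux

/-- The Cayley graph `Cay(Γ, A)`: distinct `u, v` are adjacent iff
`v - u ∈ A` or `u - v ∈ A`. -/
def cayley {G : Type*} [AddCommGroup G] (A : Set G) : SimpleGraph G where
  Adj u v := u ≠ v ∧ (v - u ∈ A ∨ u - v ∈ A)
  symm := ⟨fun _ _ h => ⟨h.1.symm, h.2.symm⟩⟩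
  loopless := ⟨fun _ h => h.1 rfl⟩

/-- The distance from `x/p` (using the standard representative of `x ∈ F_p`)
to the nearest integer. -/
noncomputable def torusNorm (p : ℕ) (x : ZMod p) : ℝ :=
  |(x.val : ℝ) / p - round ((x.val : ℝ) / p)|

theorem statement13 (p : ℕ) [Fact p.Prime] (A : Finset (ZMod p)) (k : ℕ) (hk : 1 ≤ k)
    (Γ : Finset (ZMod p)) (ρ : ℝ) (hρ0 : 0 < ρ) (hρ1 : ρ ≤ 1)
    (B : Set (ZMod p)) (hB : B = {x | ∀ ξ ∈ Γ, torusNorm p (ξ * x) ≤ ρ})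
    (hAB : ((A : Set (ZMod p)) ∩ B).ncard < k) :
    (cayley (A : Set (ZMod p))).chromaticNumber ≤
      (((2 * k - 1) * ⌈2 / ρ⌉₊ ^ Γ.card : ℕ) : ℕ∞) := by
  classical
  have hp : 0 < p := (Fact.out : p.Prime).pos
  haveI : NeZero p := ⟨hp.ne'⟩
  set N := ⌈2 / ρ⌉₊ with hNdef
  have hN0 : 0 < N := Nat.ceil_pos.mpr (by positivity)
  have hNρ : (2 : ℝ) / ρ ≤ N := Nat.le_ceil _
  -- box index
  have hidx : ∀ z : ZMod p, z.val * N / p < N := by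
    intro z
    rw [Nat.div_lt_iff_lt_mul hp, mul_comm N p]
    exact Nat.mul_lt_mul_of_lt_of_le (ZMod.val_lt z) le_rfl hN0
  let idx : ZMod p → Fin N := fun z => ⟨z.val * N / p, hidx z⟩
  -- key lemma
  have key : ∀ u v : ZMod p, idx u = idx v → torusNorm p (u - v) ≤ ρ := by
    intro u v hiv
    set a := u.val with ha
    set b := v.val with hb
    have hdiv : a * N / p = b * N / p := congrArg Fin.val hiv
    have hda := Nat.div_add_mod (a * N) p
    have hdb := Nat.div_add_mod (b * N) p
    have hma : a * N % p < p := Nat.mod_lt _ hp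
    have hmb : b * N % p < p := Nat.mod_lt _ hp
    rw [hdiv] at hda
    have h1 : a * N < b * N + p := by omega
    have h2 : b * N < a * N + p := by omega
    -- real version
    have habs : |((a : ℝ) - b)| * N < p := by
      rw [← abs_of_nonneg (by positivity : (0:ℝ) ≤ (N:ℝ)), ← abs_mul]
      have h1' : (a : ℝ) * N < (b : ℝ) * N + p := by exact_mod_cast h1
      have h2' : (b : ℝ) * N < (a : ℝ) * N + p := by exact_mod_cast h2
      rw [abs_lt]
      constructor <;> nlinarith [h1', h2']
    -- z.val relation
    set z := u - v with hz
    obtain ⟨t, ht⟩ : (p : ℤ) ∣ ((z.val : ℤ) - ((a : ℤ) - b)) := by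
      rw [← ZMod.intCast_zmod_eq_zero_iff_dvd]
      push_cast
      simp only [ZMod.natCast_val, ZMod.cast_id, hz, ha, hb]
      ring
    have hreal : ((z.val : ℝ)) = (a : ℝ) - b + p * t := by
      have := congrArg (fun x : ℤ => (x : ℝ)) ht
      push_cast at this
      linarith
    have hle : torusNorm p z ≤ |((a : ℝ) - b) / p| := by
      have := round_le ((z.val : ℝ) / p) t
      unfold torusNorm
      calc |(z.val : ℝ) / p - round ((z.val : ℝ) / p)| ≤ |(z.val : ℝ) / p - t| := this
        _ = |((a : ℝ) - b) / p| := by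
            congr 1
            rw [hreal]
            field_simp
            ring
    have hfin : |((a : ℝ) - b) / p| ≤ ρ := by
      rw [abs_div, abs_of_nonneg (by positivity : (0:ℝ) ≤ (p:ℝ))]
      rw [div_le_iff₀ (by positivity : (0:ℝ) < (p:ℝ))]
      have h1N : |((a : ℝ) - b)| ≤ p / N := by
        rw [le_div_iff₀ (by positivity : (0:ℝ) < (N:ℝ))]
        exact habs.le
      have hNinv : (p : ℝ) / N ≤ ρ * p := by
        rw [div_le_iff₀ (by positivity : (0:ℝ) < (N:ℝ))]
        have h2ρ : (2:ℝ) ≤ ρ * N := by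
          rw [← div_le_iff₀' hρ0]
          exact hNρ
        nlinarith [hp, (by exact_mod_cast hp : (0:ℝ) < (p:ℝ))]
      linarith
    exact hle.trans hfin
  -- the inner graph
  set S : Set (ZMod p) := (A : Set (ZMod p)) ∩ B with hSdef
  set H : SimpleGraph (ZMod p) := cayley S with hH
  have hSfin : S.Finite := Set.toFinite _
  set T : Finset (ZMod p) := hSfin.toFinset with hT
  have hTcard : T.card < k := by
    rw [hT, ← Set.ncard_eq_toFinset_card S hSfin]
    exact hAB
  have hdeg : ∀ v, (Finset.univ.filter (fun u => H.Adj u v)).card ≤ 2 * k - 2 := by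
    intro v
    have hsub : (Finset.univ.filter (fun u => H.Adj u v)) ⊆
        (T.image (fun s => s + v)) ∪ (T.image (fun s => v - s)) := by
      intro u hu
      simp only [Finset.mem_filter] at hu
      obtain ⟨-, hne, hor⟩ : u ∈ Finset.univ ∧ u ≠ v ∧ (v - u ∈ S ∨ u - v ∈ S) := hu
      rcases hor with hvu | huv
      · -- v - u ∈ S : u = v - (v - u)
        apply Finset.mem_union_right
        apply Finset.mem_image.mpr
        exact ⟨v - u, by rwa [hT, Set.Finite.mem_toFinset], by ring⟩
      · apply Finset.mem_union_left
        apply Finset.mem_image.mpr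
        exact ⟨u - v, by rwa [hT, Set.Finite.mem_toFinset], by ring⟩
    calc (Finset.univ.filter (fun u => H.Adj u v)).card
        ≤ ((T.image (fun s => s + v)) ∪ (T.image (fun s => v - s))).card :=
          Finset.card_le_card hsub
      _ ≤ (T.image (fun s => s + v)).card + (T.image (fun s => v - s)).card :=
          Finset.card_union_le _ _
      _ ≤ T.card + T.card := add_le_add Finset.card_image_le Finset.card_image_le
      _ ≤ 2 * k - 2 := by omega
  have hHcol : H.Colorable (2 * k - 1) := by
    have := colorable_of_card_adj_le H hdeg
    have h21 : 2 * k - 2 + 1 = 2 * k - 1 := by omega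
    rwa [h21] at this
  obtain ⟨cH⟩ := hHcol
  -- final coloring
  let F := (Γ → Fin N) × Fin (2 * k - 1)
  let C : (cayley (A : Set (ZMod p))).Coloring F :=
    SimpleGraph.Coloring.mk
      (fun x => (fun ξ : Γ => idx ((ξ : ZMod p) * x), cH x))
      (by
        intro x y hadj heq
        obtain ⟨hne, hor⟩ : x ≠ y ∧ (y - x ∈ (A : Set (ZMod p)) ∨ x - y ∈ (A : Set (ZMod p))) := hadj
        have h1 : ∀ ξ : Γ, idx ((ξ : ZMod p) * x) = idx ((ξ : ZMod p) * y) :=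
          fun ξ => congrFun (congrArg Prod.fst heq) ξ
        have h2 : cH x = cH y := congrArg Prod.snd heq
        have hyx : y - x ∈ B := by
          rw [hB]
          intro ξ hξ
          have := key ((ξ : ZMod p) * y) ((ξ : ZMod p) * x) (h1 ⟨ξ, hξ⟩).symm
          rwa [← mul_sub] at this
        have hxy : x - y ∈ B := by
          rw [hB]
          intro ξ hξ
          have := key ((ξ : ZMod p) * x) ((ξ : ZMod p) * y) (h1 ⟨ξ, hξ⟩)
          rwa [← mul_sub] at this
        have hAdjH : H.Adj x y := by
          show x ≠ y ∧ _
          refine ⟨hne, ?_⟩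
          rcases hor with h | h
          · exact Or.inl ⟨h, hyx⟩
          · exact Or.inr ⟨h, hxy⟩
        exact cH.valid hAdjH h2)
  have hcol := C.colorable
  have hcard : Fintype.card F = (2 * k - 1) * N ^ Γ.card := by
    simp only [F, Fintype.card_prod, Fintype.card_fun, Fintype.card_fin, Fintype.card_coe]
    ring
  rw [hcard] at hcol
  exact hcol.chromaticNumber_le
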